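/- arXiv:0812.1373 — 4 statements merged into one kernel-verified Lean document; each statement's English description precedes it below -/
import Mathlib

section
/- Let L be a line (1-dimensional affine subspace) in R^3, let e be a point in R^3 not on L, and let v(e) = ω × (e − a) be the velocity of e under the infinitesimal rotation about L with axis direction u (a unit vector spanning the direction of L), where a ∈ L and ω = u. Then a nonzero vector w ∈ R^3 is orthogonal to v(e) if and only if the line through e with direction w is projectively incident with L, i.e., the two lines either intersect in R^3 or have linearly dependent direction vectors (are parallel). -/
open Matrix

/-- For a line `L = {a + t • u}` in `ℝ³` with unit direction `u`, a point `e ∉ L`,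
and the velocity `v = u ×₃ (e - a)` of `e` under the infinitesimal rotation about `L`,
a nonzero vector `w` is orthogonal to `v` iff the line through `e` with direction `w`
is projectively incident with `L` (they intersect, or their directions are dependent). -/
theorem endpoint_velocity_orthogonal_iff_incident
    (a u e w : Fin 3 → ℝ) (hu : u ⬝ᵥ u = 1)
    (he : ∀ t : ℝ, e ≠ a + t • u) (hw : w ≠ 0) :
    w ⬝ᵥ (crossProduct u (e - a)) = 0 ↔
      ((∃ s t : ℝ, e + s • w = a + t • u) ∨ ¬ LinearIndependent ℝ ![w, u]) := by
  have hu0 : u ≠ 0 := by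
    intro h; rw [h] at hu; simp [dotProduct] at hu
  constructor
  · intro h
    rw [triple_product_eq_det] at h
    have hLI : ¬ LinearIndependent ℝ (fun i => (![w, u, e - a] : Matrix (Fin 3) (Fin 3) ℝ) i) := by
      intro hli
      have h3 : IsUnit (Matrix.of ![w, u, e - a]).det := (Matrix.isUnit_iff_isUnit_det _).mp
        ((Matrix.linearIndependent_rows_iff_isUnit (A := Matrix.of ![w, u, e - a])).mp hli)
      rw [show (Matrix.of ![w, u, e - a]).det = 0 from h] at h3
      simp at h3
    by_cases h2 : LinearIndependent ℝ ![w, u]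
    · left
      have hsnoc : (![w, u, e - a] : Fin 3 → Fin 3 → ℝ) = Fin.snoc ![w, u] (e - a) := by
        funext i
        fin_cases i <;> rfl
      rw [hsnoc, linearIndependent_fin_snoc] at hLI
      push_neg at hLI
      have hmem := hLI h2
      have hrange : Set.range (![w, u] : Fin 2 → Fin 3 → ℝ) = {w, u} := by
        ext x
        constructor
        · rintro ⟨i, rfl⟩; fin_cases i <;> simp
        · rintro (rfl | rfl)
          · exact ⟨0, rfl⟩
          · exact ⟨1, rfl⟩
      rw [hrange, Submodule.mem_span_pair] at hmem
      obtain ⟨c, d, hcd⟩ := hmem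
      refine ⟨-c, d, ?_⟩
      funext i
      have := congrFun hcd i
      simp [Pi.add_apply, Pi.sub_apply, Pi.smul_apply] at this ⊢
      linarith
    · right; exact h2
  · rintro (⟨s, t, hst⟩ | h2)
    · have hea : e - a = t • u - s • w := by
        have := congrArg (fun x => x - a - s • w) hst
        rw [show e - a = e + s • w - a - s • w by abel, this]
        abel
      rw [hea, map_sub, LinearMap.map_smul, LinearMap.map_smul]
      simp only [dotProduct_sub, dotProduct_smul]
      rw [cross_self]
      have h1 : w ⬝ᵥ (crossProduct u) w = 0 := dot_cross_self u w
      simp [h1]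
    · rw [linearIndependent_fin2] at h2
      push_neg at h2
      simp only [Matrix.cons_val_one, Matrix.head_cons, Matrix.cons_val_zero] at h2
      obtain ⟨c, hc⟩ := h2 hu0
      rw [← hc, smul_dotProduct, dot_self_cross, smul_zero]
end

section
/- Let A_1, ..., A_{n-1} be lines in R^3 and e a point in R^3. For each i, let v_i = u_i × (e − a_i) be the velocity of e under infinitesimal rotation about A_i (where a_i ∈ A_i and u_i is a unit direction vector of A_i). Then span{v_1, ..., v_{n-1}} ≠ R^3 if and only if there exists a line through e which is projectively incident with every A_i. -/
open Matrix

private lemma dot_eq_inner (x y : EuclideanSpace ℝ (Fin 3)) :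
    (x : Fin 3 → ℝ) ⬝ᵥ y = inner ℝ x y := by
  simp [PiLp.inner_apply, RCLike.inner_apply, dotProduct, mul_comm]

private lemma span_ne_top_iff (v : Set (Fin 3 → ℝ)) :
    Submodule.span ℝ v ≠ ⊤ ↔ ∃ w : Fin 3 → ℝ, w ≠ 0 ∧ ∀ x ∈ v, x ⬝ᵥ w = 0 := by
  constructor
  · intro h
    set K : Submodule ℝ (EuclideanSpace ℝ (Fin 3)) :=
      (Submodule.span ℝ v).map (WithLp.linearEquiv 2 ℝ (Fin 3 → ℝ)).symm.toLinearMap with hK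
    have hKt : K ≠ ⊤ := by
      intro hK'
      apply h
      rw [eq_top_iff]
      intro x _
      have hx : WithLp.toLp 2 x ∈ K := hK' ▸ Submodule.mem_top
      obtain ⟨y, hy, hyx⟩ := Submodule.mem_map.mp hx
      exact (WithLp.toLp_injective 2 hyx) ▸ hy
    have hne : Kᗮ ≠ ⊥ := fun hb => hKt (Submodule.orthogonal_eq_bot_iff.mp hb)
    obtain ⟨w, hwK, hw0⟩ := Submodule.ne_bot_iff _ |>.mp hne
    refine ⟨w.ofLp, by simpa using hw0, fun x hx => ?_⟩
    have hxK : WithLp.toLp 2 x ∈ K := Submodule.mem_map_of_mem (Submodule.subset_span hx)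
    have hdi := dot_eq_inner (WithLp.toLp 2 x) w
    rw [hdi]
    exact (Submodule.mem_orthogonal K w).mp hwK _ hxK
  · rintro ⟨w, hw0, hw⟩ h
    have hmem : w ∈ Submodule.span ℝ v := h ▸ Submodule.mem_top
    let f : (Fin 3 → ℝ) →ₗ[ℝ] ℝ :=
      { toFun := fun x => x ⬝ᵥ w
        map_add' := fun x y => add_dotProduct x y w
        map_smul' := fun c x => smul_dotProduct c x w }
    have hle : Submodule.span ℝ v ≤ LinearMap.ker f :=
      Submodule.span_le.mpr fun x hx => hw x hx
    have : w ⬝ᵥ w = 0 := hle hmem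
    exact hw0 ((dotProduct_self_eq_zero).mp this)

private lemma det_zero_iff (w u c : Fin 3 → ℝ) :
    Matrix.det ![w, u, c] = 0 ↔
      ((∃ s t : ℝ, c = s • w + t • u) ∨ ¬ LinearIndependent ℝ ![w, u]) := by
  have hA : ¬ LinearIndependent ℝ ![w, u, c] ↔ Matrix.det ![w, u, c] = 0 := by
    rw [show (![w, u, c] : Fin 3 → Fin 3 → ℝ) = (Matrix.of ![w, u, c]).row from rfl,
      Matrix.linearIndependent_rows_iff_isUnit, Matrix.isUnit_iff_isUnit_det,
      isUnit_iff_ne_zero, not_not]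
    rfl
  have hsnoc : (![w, u, c] : Fin 3 → Fin 3 → ℝ) = Fin.snoc ![w, u] c := by
    funext j
    fin_cases j <;> simp [Fin.snoc] <;> rfl
  rw [← hA, hsnoc, linearIndependent_fin_snoc]
  by_cases hli : LinearIndependent ℝ ![w, u]
  · simp only [hli, true_and, not_not, not_true, or_false]
    rw [Matrix.range_cons, Matrix.range_cons_empty, Set.singleton_union,
      Submodule.mem_span_pair]
    constructor
    · rintro ⟨s, t, h⟩; exact ⟨s, t, h.symm⟩
    · rintro ⟨s, t, h⟩; exact ⟨s, t, h.symm⟩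
  · simp [hli]

/-- For lines `A i = {a i + t • u i}` in `ℝ³` and a point `e`, the velocities
`v i = u i ×₃ (e - a i)` of `e` under the infinitesimal rotations about the lines `A i`
fail to span `ℝ³` iff there is a line through `e` (with some nonzero direction `w`)
projectively incident with every `A i`. -/
theorem velocities_span_ne_top_iff_incident_line
    (n : ℕ) (a u : Fin n → (Fin 3 → ℝ)) (e : Fin 3 → ℝ)
    (hu : ∀ i, u i ⬝ᵥ u i = 1) :
    Submodule.span ℝ (Set.range fun i => crossProduct (u i) (e - a i)) ≠ ⊤ ↔
      ∃ w : Fin 3 → ℝ, w ≠ 0 ∧ ∀ i,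
        ((∃ s t : ℝ, e + s • w = a i + t • u i) ∨ ¬ LinearIndependent ℝ ![w, u i]) := by
  rw [span_ne_top_iff]
  refine exists_congr fun w => and_congr_right fun hw0 => ?_
  rw [Set.forall_mem_range]
  refine forall_congr' fun i => ?_
  rw [dotProduct_comm, triple_product_eq_det, det_zero_iff]
  refine or_congr_left ?_
  constructor
  · rintro ⟨s, t, h⟩
    exact ⟨-s, t, by linear_combination (norm := module) h⟩
  · rintro ⟨s, t, h⟩
    exact ⟨-s, t, by linear_combination (norm := module) h⟩
end

section
/- Fix d ≥ 2 and points p_{ij}, q_{ij} ∈ R^{d+1} for 1 ≤ i < j ≤ d+1. The homogeneous linear system ⟨A q_{ij}, p_{ij}⟩ = 0 (for all i < j) in the unknown (d+1)×(d+1) antisymmetric matrix A has a nonzero solution if and only if the C(d+1,2) exterior 2-vectors p_{ij} ∧ q_{ij} are linearly dependent in Λ²(R^{d+1}). -/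
open Matrix ExteriorAlgebra

namespace PlatformAux

variable {n : ℕ}

abbrev Idx (n : ℕ) := {ij : Fin n × Fin n // ij.1 < ij.2}

lemma pair_sum {M : Type*} [AddCommGroup M] (f : Fin n → Fin n → M)
    (hdiag : ∀ a, f a a = 0) :
    (∑ a, ∑ b, f a b) =
      ∑ ij : Idx n, (f ij.1.1 ij.1.2 + f ij.1.2 ij.1.1) := by
  classical
  have h0 : (∑ a, ∑ b, f a b) = ∑ ab : Fin n × Fin n, f ab.1 ab.2 :=
    (Fintype.sum_prod_type (f := fun ab : Fin n × Fin n => f ab.1 ab.2)).symm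
  rw [h0]
  rw [← Finset.sum_filter_add_sum_filter_not Finset.univ
    (fun ab : Fin n × Fin n => ab.1 < ab.2) (fun ab => f ab.1 ab.2)]
  have h2 : (∑ ab ∈ Finset.univ.filter (fun ab : Fin n × Fin n => ¬ ab.1 < ab.2), f ab.1 ab.2)
      = ∑ ab ∈ Finset.univ.filter (fun ab : Fin n × Fin n => ab.1 < ab.2), f ab.2 ab.1 := by
    rw [← Finset.sum_subset (s₁ := Finset.univ.filter (fun ab : Fin n × Fin n => ab.2 < ab.1))
      (by intro ab hab; simp only [Finset.mem_filter, Finset.mem_univ, true_and] at *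
          exact not_lt_of_gt hab)
      (by intro ab hab hab'; simp only [Finset.mem_filter, Finset.mem_univ, true_and] at *
          have : ab.1 = ab.2 := le_antisymm (not_lt.1 hab') (not_lt.1 hab)
          rw [show ab.2 = ab.1 from this.symm, hdiag])]
    refine Finset.sum_nbij' Prod.swap Prod.swap ?_ ?_ ?_ ?_ ?_
    · intro ab hab; simp only [Finset.mem_filter, Finset.mem_univ, true_and] at *; exact hab
    · intro ab hab; simp only [Finset.mem_filter, Finset.mem_univ, true_and] at *; exact hab
    · intro ab _; rfl
    · intro ab _; rfl
    · intro ab _; rfl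
  rw [h2, ← Finset.sum_add_distrib]
  exact Finset.sum_subtype _ (by simp) _

/-- basis wedge products -/
noncomputable def we (ij : Idx n) : ExteriorAlgebra ℝ (Fin n → ℝ) :=
  ι ℝ (Pi.single ij.1.1 (1:ℝ)) * ι ℝ (Pi.single ij.1.2 (1:ℝ))

lemma single_eq_smul (i : Fin n) (c : ℝ) :
    (Pi.single i c : Fin n → ℝ) = c • (Pi.single i 1 : Fin n → ℝ) := by
  rw [← Pi.single_smul, smul_eq_mul, mul_one]

lemma we_swap (ij : Idx n) :
    ι ℝ (Pi.single ij.1.2 (1:ℝ)) * ι ℝ (Pi.single ij.1.1 (1:ℝ)) = - we ij :=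
  eq_neg_of_add_eq_zero_left (by rw [add_comm]; exact ι_add_mul_swap _ _)

/-- expansion of a wedge of two vectors in terms of basis wedges -/
lemma expand (x y : Fin n → ℝ) :
    ι ℝ x * ι ℝ y =
      ∑ ij : Idx n, (x ij.1.1 * y ij.1.2 - x ij.1.2 * y ij.1.1) • we ij := by
  conv_lhs => rw [← Finset.univ_sum_single x, ← Finset.univ_sum_single y]
  rw [map_sum, map_sum, Finset.sum_mul_sum]
  have h1 : ∀ a b : Fin n,
      ι ℝ (Pi.single a (x a)) * ι ℝ (Pi.single b (y b)) =
        (x a * y b) • (ι ℝ (Pi.single a (1:ℝ) : Fin n → ℝ) * ι ℝ (Pi.single b (1:ℝ) : Fin n → ℝ)) := by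
    intro a b
    rw [single_eq_smul a (x a), single_eq_smul b (y b), _root_.map_smul, _root_.map_smul,
      smul_mul_smul_comm]
  rw [Finset.sum_congr rfl fun a _ => Finset.sum_congr rfl fun b _ => h1 a b]
  rw [pair_sum (fun a b => (x a * y b) • (ι ℝ (Pi.single a (1:ℝ) : Fin n → ℝ) * ι ℝ (Pi.single b (1:ℝ) : Fin n → ℝ)))
    (fun a => by
      show (x a * y a) • ((ι ℝ) (Pi.single a (1:ℝ) : Fin n → ℝ) * (ι ℝ) (Pi.single a 1)) = 0
      rw [ι_sq_zero, smul_zero])]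
  refine Finset.sum_congr rfl fun ij _ => ?_
  rw [show (ι ℝ (Pi.single ij.1.2 (1:ℝ)) * ι ℝ (Pi.single ij.1.1 (1:ℝ))) = - we ij from we_swap ij]
  rw [smul_neg, ← sub_eq_add_neg, sub_smul]
  rfl


lemma fin2_one_ne_zero : (1 : Fin 2) ≠ 0 := by decide
lemma fin2_zero_ne_one : (0 : Fin 2) ≠ 1 := by decide

/-- the bilinear form of a matrix as a multilinear map on `Fin 2` -/
@[simps]
noncomputable def bilMat (A : Matrix (Fin n) (Fin n) ℝ) :
    MultilinearMap ℝ (fun _ : Fin 2 => (Fin n → ℝ)) ℝ where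
  toFun v := v 0 ⬝ᵥ A.mulVec (v 1)
  map_update_add' v i a b := by
    fin_cases i <;>
      simp [Function.update_apply, add_dotProduct, dotProduct_add, Matrix.mulVec_add,
        fin2_one_ne_zero, fin2_zero_ne_one]
  map_update_smul' v i c a := by
    fin_cases i <;>
      simp [Function.update_apply, smul_dotProduct, dotProduct_smul, Matrix.mulVec_smul,
        fin2_one_ne_zero, fin2_zero_ne_one]

lemma quad_zero {A : Matrix (Fin n) (Fin n) ℝ} (hA : Aᵀ = -A) (v : Fin n → ℝ) :
    v ⬝ᵥ A.mulVec v = 0 := by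
  have h1 : v ⬝ᵥ A.mulVec v = - (v ⬝ᵥ A.mulVec v) := by
    conv_lhs => rw [Matrix.dotProduct_mulVec]
    have hv : v ᵥ* A = (-A) *ᵥ v := by rw [← hA, ← Matrix.vecMul_transpose, Matrix.transpose_transpose]
    rw [hv, Matrix.neg_mulVec, neg_dotProduct, dotProduct_comm]
  linarith [h1]

/-- the alternating form of an antisymmetric matrix -/
noncomputable def altMat (A : Matrix (Fin n) (Fin n) ℝ) (hA : Aᵀ = -A) :
    (Fin n → ℝ) [⋀^Fin 2]→ₗ[ℝ] ℝ :=
  { bilMat A with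
    map_eq_zero_of_eq' := by
      intro v i j hv hij
      have hv01 : v 0 = v 1 := by
        fin_cases i <;> fin_cases j <;> simp_all
      show v 0 ⬝ᵥ A.mulVec (v 1) = 0
      rw [← hv01]
      exact quad_zero hA (v 0) }

/-- family of alternating maps concentrated in degree 2 -/
noncomputable def seqAlt (A : Matrix (Fin n) (Fin n) ℝ) (hA : Aᵀ = -A) :
    ∀ i, (Fin n → ℝ) [⋀^Fin i]→ₗ[ℝ] ℝ
  | 2 => altMat A hA
  | _ => 0

lemma fA_mul (A : Matrix (Fin n) (Fin n) ℝ) (hA : Aᵀ = -A) (x y : Fin n → ℝ) :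
    liftAlternating (seqAlt A hA) (ι ℝ x * ι ℝ y) = x ⬝ᵥ A.mulVec y := by
  have h2 : ι ℝ x * ι ℝ y = ιMulti ℝ 2 ![x, y] := by
    rw [ιMulti_apply]
    simp
  rw [h2, liftAlternating_apply_ιMulti]
  show (![x, y] 0) ⬝ᵥ A.mulVec (![x, y] 1) = x ⬝ᵥ A.mulVec y
  simp

lemma dot_single (A : Matrix (Fin n) (Fin n) ℝ) (a b : Fin n) :
    (Pi.single a (1:ℝ) : Fin n → ℝ) ⬝ᵥ A.mulVec (Pi.single b (1:ℝ)) = A a b := by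
  classical
  simp [dotProduct, Matrix.mulVec, Pi.single_apply, ite_mul, mul_ite,
    Finset.sum_ite_eq, Finset.sum_ite_eq']

lemma fA_we (A : Matrix (Fin n) (Fin n) ℝ) (hA : Aᵀ = -A) (ij : Idx n) :
    liftAlternating (seqAlt A hA) (we ij) = A ij.1.1 ij.1.2 := by
  rw [we, fA_mul, dot_single]


/-- the antisymmetric matrix with entries `G` above the diagonal -/
noncomputable def genA (G : Idx n → ℝ) : Matrix (Fin n) (Fin n) ℝ :=
  Matrix.of fun a b =>
    if h : a < b then G ⟨(a, b), h⟩ else if h' : b < a then -G ⟨(b, a), h'⟩ else 0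

lemma genA_diag (G : Idx n → ℝ) (a : Fin n) : genA G a a = 0 := by
  simp [genA]

lemma genA_apply (G : Idx n → ℝ) (ij : Idx n) : genA G ij.1.1 ij.1.2 = G ij := by
  simp only [genA, Matrix.of_apply, dif_pos ij.2]

lemma genA_swap (G : Idx n → ℝ) (ij : Idx n) : genA G ij.1.2 ij.1.1 = -G ij := by
  simp only [genA, Matrix.of_apply, dif_neg (asymm ij.2), dif_pos ij.2]

lemma genA_anti (G : Idx n → ℝ) : (genA G)ᵀ = -(genA G) := by
  ext a b
  simp only [Matrix.transpose_apply, Matrix.neg_apply]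
  rcases lt_trichotomy a b with h | h | h
  · simp [genA, dif_pos h, dif_neg (asymm h)]
  · subst h; simp [genA]
  · simp [genA, dif_pos h, dif_neg (asymm h)]

lemma genA_bilin (G : Idx n → ℝ) (x y : Fin n → ℝ) :
    x ⬝ᵥ (genA G).mulVec y =
      ∑ ij : Idx n, (x ij.1.1 * y ij.1.2 - x ij.1.2 * y ij.1.1) * G ij := by
  have h0 : x ⬝ᵥ (genA G).mulVec y = ∑ a, ∑ b, x a * (genA G a b * y b) := by
    simp [dotProduct, Matrix.mulVec, Finset.mul_sum]
  rw [h0, pair_sum (fun a b => x a * (genA G a b * y b))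
    (fun a => by show x a * (genA G a a * y a) = 0
                 rw [genA_diag]; ring)]
  refine Finset.sum_congr rfl fun ij _ => ?_
  rw [genA_apply, genA_swap]
  ring

/-- the basis wedges are linearly independent -/
lemma we_indep : LinearIndependent ℝ (we (n := n)) := by
  classical
  rw [Fintype.linearIndependent_iff]
  intro g hg ij
  have h := congrArg (liftAlternating (seqAlt (genA ((Pi.single ij 1 : Idx n → ℝ))) (genA_anti _))) hg
  rw [map_sum, map_zero] at h
  have h2 : ∀ kl : Idx n,
      liftAlternating (seqAlt (genA ((Pi.single ij 1 : Idx n → ℝ))) (genA_anti _)) (g kl • we kl)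
        = g kl * (Pi.single ij 1 : Idx n → ℝ) kl := by
    intro kl
    rw [_root_.map_smul, fA_we, genA_apply, smul_eq_mul]
  rw [Finset.sum_congr rfl fun kl _ => h2 kl] at h
  simpa [Pi.single_apply, mul_ite, Finset.sum_ite_eq'] using h

lemma mem_span_we (x y : Fin n → ℝ) :
    ι ℝ x * ι ℝ y ∈ Submodule.span ℝ (Set.range (we (n := n))) := by
  rw [expand]
  exact Submodule.sum_mem _ fun ij _ =>
    Submodule.smul_mem _ _ (Submodule.subset_span ⟨ij, rfl⟩)

end PlatformAux

open PlatformAux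

set_option synthInstance.maxHeartbeats 1000000
set_option maxHeartbeats 2000000

/-- For `d ≥ 2` and points `p ij, q ij ∈ ℝ^{d+1}` indexed by pairs `i < j` in
`Fin (d+1)`, the homogeneous system `⟨A (q ij), p ij⟩ = 0` in the unknown antisymmetric
`(d+1)×(d+1)` matrix `A` has a nonzero solution iff the exterior 2-vectors `p ij ∧ q ij`
are linearly dependent in `Λ²(ℝ^{d+1})` (Proposition 7.1, platform flexibility). -/
theorem platform_flexible_iff_dependent
    (d : ℕ) (hd : 2 ≤ d)
    (p q : {ij : Fin (d + 1) × Fin (d + 1) // ij.1 < ij.2} → (Fin (d + 1) → ℝ)) :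
    (∃ A : Matrix (Fin (d + 1)) (Fin (d + 1)) ℝ, A ≠ 0 ∧ Aᵀ = -A ∧
        ∀ ij, A.mulVec (q ij) ⬝ᵥ p ij = 0) ↔
      ¬ LinearIndependent ℝ
        (fun ij => ι ℝ (p ij) * ι ℝ (q ij) :
          {ij : Fin (d + 1) × Fin (d + 1) // ij.1 < ij.2} → ExteriorAlgebra ℝ (Fin (d + 1) → ℝ)) := by
  classical
  set E : Submodule ℝ (ExteriorAlgebra ℝ (Fin (d + 1) → ℝ)) :=
    Submodule.span ℝ (Set.range (we (n := d + 1))) with hE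
  haveI : Nonempty (Idx (d + 1)) :=
    ⟨⟨(⟨0, by omega⟩, ⟨1, by omega⟩), by simp [Fin.lt_def]⟩⟩
  have hmem : ∀ ij : Idx (d + 1), ι ℝ (p ij) * ι ℝ (q ij) ∈ E := fun ij => mem_span_we _ _
  constructor
  · rintro ⟨A, hA0, hAt, hsys⟩ hindep
    have hindep' : LinearIndependent ℝ (fun ij : Idx (d + 1) => (⟨_, hmem ij⟩ : E)) :=
      LinearIndependent.of_comp E.subtype (by exact hindep)
    have hcard : Fintype.card (Idx (d + 1)) = Module.finrank ℝ E :=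
      (finrank_span_eq_card we_indep).symm
    let b := basisOfLinearIndependentOfCardEqFinrank hindep' hcard
    have hphi : (liftAlternating (seqAlt A hAt)) ∘ₗ E.subtype = 0 := by
      apply b.ext
      intro ij
      have hb : (b ij : ExteriorAlgebra ℝ (Fin (d + 1) → ℝ)) = ι ℝ (p ij) * ι ℝ (q ij) := by
        rw [show b = basisOfLinearIndependentOfCardEqFinrank hindep' hcard from rfl,
          coe_basisOfLinearIndependentOfCardEqFinrank]
      simp only [LinearMap.comp_apply, LinearMap.zero_apply, Submodule.subtype_apply]
      rw [hb, fA_mul]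
      rw [← hsys ij, dotProduct_comm]
    have hAzero : ∀ ij : Idx (d + 1), A ij.1.1 ij.1.2 = 0 := by
      intro ij
      have h := LinearMap.congr_fun hphi ⟨we ij, Submodule.subset_span ⟨ij, rfl⟩⟩
      simp only [LinearMap.comp_apply, LinearMap.zero_apply, Submodule.subtype_apply] at h
      rwa [fA_we] at h
    apply hA0
    ext a b'
    rcases lt_trichotomy a b' with h | h | h
    · simpa using hAzero ⟨(a, b'), h⟩
    · subst h
      have h1 := congrFun (congrFun hAt a) a
      simp only [Matrix.transpose_apply, Matrix.neg_apply] at h1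
      simp only [Matrix.zero_apply]
      linarith
    · have h1 := congrFun (congrFun hAt b') a
      simp only [Matrix.transpose_apply, Matrix.neg_apply] at h1
      have h2 := hAzero ⟨(b', a), h⟩
      simp only [Matrix.zero_apply]
      simp only [show A b' a = 0 from h2] at h1
      linarith
  · intro hdep
    set S : Submodule ℝ (ExteriorAlgebra ℝ (Fin (d + 1) → ℝ)) :=
      Submodule.span ℝ (Set.range fun ij : Idx (d + 1) => ι ℝ (p ij) * ι ℝ (q ij)) with hS
    have hSle : S ≤ E := Submodule.span_le.2 (by rintro _ ⟨ij, rfl⟩; exact hmem ij)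
    have hfr : Fintype.card (Idx (d + 1)) ≠ Module.finrank ℝ S := by
      intro hEq
      exact hdep (linearIndependent_iff_card_eq_finrank_span.2 hEq)
    have hSne : S ≠ E := by
      intro hEq
      exact hfr (by rw [hEq]; exact (finrank_span_eq_card we_indep).symm)
    set S' : Submodule ℝ E := S.comap E.subtype with hS'
    have hS'top : S' ≠ ⊤ := by
      intro h
      refine hSne (le_antisymm hSle fun v hv => ?_)
      have hmemS : (⟨v, hv⟩ : E) ∈ S' := by rw [h]; trivial
      exact hmemS
    obtain ⟨g, hg0, hgmap⟩ :=
      Submodule.exists_dual_map_eq_bot_of_lt_top (lt_top_iff_ne_top.2 hS'top) inferInstance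
    let bs : Module.Basis (Idx (d + 1)) ℝ E := Module.Basis.span (we_indep (n := d + 1))
    have hbs : ∀ ij : Idx (d + 1), ((bs ij : E) : ExteriorAlgebra ℝ (Fin (d + 1) → ℝ)) = we ij :=
      fun ij => congrArg Subtype.val (Module.Basis.span_apply we_indep ij)
    set G : Idx (d + 1) → ℝ := fun ij => g (bs ij) with hG
    have hkey : ∀ x y : Fin (d + 1) → ℝ,
        x ⬝ᵥ (genA G).mulVec y = g ⟨ι ℝ x * ι ℝ y, mem_span_we x y⟩ := by
      intro x y
      have hsum : (⟨ι ℝ x * ι ℝ y, mem_span_we x y⟩ : E)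
          = ∑ ij : Idx (d + 1), (x ij.1.1 * y ij.1.2 - x ij.1.2 * y ij.1.1) • bs ij := by
        rw [Subtype.ext_iff, AddSubmonoidClass.coe_finset_sum]
        simp only [SetLike.val_smul, hbs]
        exact expand x y
      rw [genA_bilin, hsum, map_sum]
      simp only [_root_.map_smul, smul_eq_mul, hG]
    refine ⟨genA G, ?_, genA_anti G, ?_⟩
    · intro h0
      apply hg0
      refine Module.Basis.ext bs fun ij => ?_
      have : genA G ij.1.1 ij.1.2 = 0 := by rw [h0]; simp
      rw [genA_apply] at this
      simpa [hG] using this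
    · intro ij
      rw [dotProduct_comm, hkey]
      have hw : (⟨ι ℝ (p ij) * ι ℝ (q ij), mem_span_we _ _⟩ : E) ∈ S' := by
        simp only [hS', Submodule.mem_comap, Submodule.subtype_apply]
        exact Submodule.subset_span ⟨ij, rfl⟩
      have hmap := Submodule.mem_map_of_mem (f := g) hw
      rw [hgmap] at hmap
      simpa using hmap
end

section
/- For every point t ∈ R, let C(t) = (t, t², t³) ∈ R^3 be a point on the twisted cubic and C'(t) = (1, 2t, 3t²) its velocity. Embedding R^3 as x_0 = 1 in R^4, the tangent line to the twisted cubic at C(t) has Plücker vector L(t) = (1, C(t)) ∧ (0, C'(t)) ∈ Λ²(R^4). Then all the vectors L(t), t ∈ R, lie in a common 5-dimensional linear subspace of the 6-dimensional space Λ²(R^4); i.e., there exists a nonzero linear functional on Λ²(R^4) vanishing on L(t) for all t ∈ R (the tangents of a twisted cubic lie in a linear complex). -/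
open ExteriorAlgebra

noncomputable section TC

def tcE (i : Fin 4) : Fin 4 → ℝ := Pi.single i 1

def tcW (i : Fin 4) : ExteriorAlgebra ℝ (Fin 4 → ℝ) := ι ℝ (tcE i)

def tcV : Fin 5 → ExteriorAlgebra ℝ (Fin 4 → ℝ) :=
  ![tcW 0 * tcW 1, tcW 0 * tcW 2, (3 : ℝ) • (tcW 0 * tcW 3) + tcW 1 * tcW 2,
    tcW 1 * tcW 3, tcW 2 * tcW 3]

def tcProj (i j : Fin 4) : (Fin 4 → ℝ) →ₗ[ℝ] (Fin 2 → ℝ) :=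
  LinearMap.pi (fun k => LinearMap.proj (![i, j] k))

def tcFam (i j : Fin 4) : ∀ n : ℕ, ((Fin 4 → ℝ) [⋀^Fin n]→ₗ[ℝ] ℝ)
  | 2 => (Matrix.detRowAlternating : (Fin 2 → ℝ) [⋀^Fin 2]→ₗ[ℝ] ℝ).compLinearMap (tcProj i j)
  | _ => 0

def tcF (i j : Fin 4) : ExteriorAlgebra ℝ (Fin 4 → ℝ) →ₗ[ℝ] ℝ :=
  liftAlternating (tcFam i j)

lemma tcF_mul (i j : Fin 4) (x y : Fin 4 → ℝ) :
    tcF i j (ι ℝ x * ι ℝ y) = x i * y j - x j * y i := by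
  have h : ι ℝ x * ι ℝ y = ιMulti ℝ 2 ![x, y] := by
    rw [ιMulti_apply]
    simp [List.ofFn_succ]
  rw [h, tcF, liftAlternating_apply_ιMulti]
  show Matrix.detRowAlternating (fun k => tcProj i j (![x, y] k)) = _
  rw [show (fun k => tcProj i j (![x, y] k)) = ![![x i, x j], ![y i, y j]] by
    funext k l
    fin_cases k <;> fin_cases l <;> simp [tcProj]]
  show Matrix.det (Matrix.of ![![x i, x j], ![y i, y j]]) = _
  rw [Matrix.det_fin_two]
  simp

lemma tcF_W (i j a b : Fin 4) :
    tcF i j (tcW a * tcW b) =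
      tcE a i * tcE b j - tcE a j * tcE b i := by
  rw [tcW, tcW, tcF_mul]

lemma tc_indep : LinearIndependent ℝ tcV := by
  rw [Fintype.linearIndependent_iff]
  intro g hg
  have h01 := congrArg (tcF 0 1) hg
  have h02 := congrArg (tcF 0 2) hg
  have h03 := congrArg (tcF 0 3) hg
  have h13 := congrArg (tcF 1 3) hg
  have h23 := congrArg (tcF 2 3) hg
  simp only [Fin.sum_univ_five, map_add, map_smul, map_zero, tcV,
    Matrix.cons_val_zero, Matrix.cons_val_one, Matrix.head_cons,
    Matrix.cons_val_two, Matrix.tail_cons, Matrix.cons_val_three,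
    Matrix.cons_val_four, tcF_W, tcE, smul_eq_mul] at h01 h02 h03 h13 h23
  norm_num [Pi.single_apply] at h01 h02 h03 h13 h23
  intro k
  fin_cases k <;> simp_all

lemma tc_mem2 (x y : Fin 4 → ℝ) : ι ℝ x * ι ℝ y ∈ ⋀[ℝ]^2 (Fin 4 → ℝ) := by
  rw [exteriorPower, pow_two]
  exact Submodule.mul_mem_mul (LinearMap.mem_range_self _ x) (LinearMap.mem_range_self _ y)

lemma tc_swap (x y : Fin 4 → ℝ) : ι ℝ y * ι ℝ x = -(ι ℝ x * ι ℝ y) :=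
  eq_neg_of_add_eq_zero_left (by rw [add_comm]; exact ι_add_mul_swap x y)

end TC

/-- The tangent line of the twisted cubic `t ↦ (t, t², t³)` at the point with
parameter `t` has Plücker vector `L t = (1, t, t², t³) ∧ (0, 1, 2t, 3t²) ∈ Λ²(ℝ⁴)`. All
these Plücker vectors lie in a common 5-dimensional linear subspace of the 6-dimensional
space `Λ²(ℝ⁴)`: the tangents of a twisted cubic belong to a linear complex. -/
theorem twisted_cubic_tangents_in_linear_complex :
    ∃ S : Submodule ℝ (ExteriorAlgebra ℝ (Fin 4 → ℝ)),
      S ≤ ⋀[ℝ]^2 (Fin 4 → ℝ) ∧ Module.finrank ℝ S = 5 ∧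
      ∀ t : ℝ,
        ι ℝ (![1, t, t ^ 2, t ^ 3] : Fin 4 → ℝ)
            * ι ℝ (![0, 1, 2 * t, 3 * t ^ 2] : Fin 4 → ℝ) ∈ S := by
  refine ⟨Submodule.span ℝ (Set.range tcV), ?_, ?_, ?_⟩
  · rw [Submodule.span_le]
    rintro _ ⟨k, rfl⟩
    fin_cases k <;> simp only [tcV, tcW, Matrix.cons_val_zero, Matrix.cons_val_one,
      Matrix.head_cons, Matrix.cons_val_two, Matrix.tail_cons, Matrix.cons_val_three,
      Matrix.cons_val_four, SetLike.mem_coe]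
    · exact tc_mem2 _ _
    · exact tc_mem2 _ _
    · exact Submodule.add_mem _ (Submodule.smul_mem _ _ (tc_mem2 _ _)) (tc_mem2 _ _)
    · exact tc_mem2 _ _
    · exact tc_mem2 _ _
  · rw [finrank_span_eq_card tc_indep]
    simp
  · intro t
    have hu : (![1, t, t ^ 2, t ^ 3] : Fin 4 → ℝ)
        = tcE 0 + t • tcE 1 + t ^ 2 • tcE 2 + t ^ 3 • tcE 3 := by
      funext i
      fin_cases i <;> simp [tcE, Pi.single_apply]
    have hv : (![0, 1, 2 * t, 3 * t ^ 2] : Fin 4 → ℝ)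
        = tcE 1 + (2 * t) • tcE 2 + (3 * t ^ 2) • tcE 3 := by
      funext i
      fin_cases i <;> simp [tcE, Pi.single_apply]
    have key : ι ℝ (![1, t, t ^ 2, t ^ 3] : Fin 4 → ℝ)
        * ι ℝ (![0, 1, 2 * t, 3 * t ^ 2] : Fin 4 → ℝ)
        = tcV 0 + (2 * t) • tcV 1 + (t ^ 2) • tcV 2 + (2 * t ^ 3) • tcV 3
          + (t ^ 4) • tcV 4 := by
      rw [hu, hv]
      simp only [map_add, map_smul, add_mul, mul_add, smul_mul_assoc, mul_smul_comm,
        smul_smul]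
      rw [show ι ℝ (tcE 1) * ι ℝ (tcE 1) = 0 from ι_sq_zero _,
        show ι ℝ (tcE 2) * ι ℝ (tcE 2) = 0 from ι_sq_zero _,
        show ι ℝ (tcE 3) * ι ℝ (tcE 3) = 0 from ι_sq_zero _,
        tc_swap (tcE 1) (tcE 2), tc_swap (tcE 1) (tcE 3), tc_swap (tcE 2) (tcE 3)]
      simp only [tcV, tcW, Matrix.cons_val_zero, Matrix.cons_val_one, Matrix.head_cons,
        Matrix.cons_val_two, Matrix.tail_cons, Matrix.cons_val_three, Matrix.cons_val_four]
      module
    rw [key]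
    have hm : ∀ k : Fin 5, tcV k ∈ Submodule.span ℝ (Set.range tcV) :=
      fun k => Submodule.subset_span ⟨k, rfl⟩
    exact Submodule.add_mem _ (Submodule.add_mem _ (Submodule.add_mem _
      (Submodule.add_mem _ (hm 0) (Submodule.smul_mem _ _ (hm 1)))
      (Submodule.smul_mem _ _ (hm 2))) (Submodule.smul_mem _ _ (hm 3)))
      (Submodule.smul_mem _ _ (hm 4))
end
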